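/- For the subcritical solution ω(t) = 2√(2h/J)(K₂cos²(γt) + K₁ sin(γt)cos(γt))/P(t), where P(t) = (1+K₂²)cos²(γt) + 2K₁K₂ sin(γt)cos(γt) + K₁² sin²(γt), the function θ(t) = (2/γ)√(2h/J)·(θ₁(t)+θ₂(t)+θ₃(t))/(4K₁²K₂² + (1+K₂²−K₁²)²), with θ₁(t) = K₂(1+K₁²+K₂²)γt, θ₂(t) = (K₁/2)(K₁²+K₂²−1) ln P(t), θ₃(t) = −2K₁K₂ arctan(K₁ tan(γt) + K₂), satisfies θ'(t) = ω(t) at all t where tan(γt) is defined. -/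

import Mathlib

theorem subcritical_theta_antiderivative
    (h J γ K₁ K₂ : ℝ) (hh : h > 0) (hJ : J > 0) (hγ : γ > 0) (hK₁ : K₁ ≠ 0)
    (hden : 4 * K₁ ^ 2 * K₂ ^ 2 + (1 + K₂ ^ 2 - K₁ ^ 2) ^ 2 ≠ 0)
    (P ω θ : ℝ → ℝ)
    (hP : ∀ t, P t = (1 + K₂ ^ 2) * Real.cos (γ * t) ^ 2
      + 2 * K₁ * K₂ * Real.sin (γ * t) * Real.cos (γ * t)
      + K₁ ^ 2 * Real.sin (γ * t) ^ 2)
    (hPpos : ∀ t, P t > 0)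
    (hω : ∀ t, ω t = 2 * Real.sqrt (2 * h / J) *
      ((K₂ * Real.cos (γ * t) ^ 2 + K₁ * Real.sin (γ * t) * Real.cos (γ * t)) / P t))
    (hθ : ∀ t, θ t = (2 / γ) * Real.sqrt (2 * h / J) *
      ((K₂ * (1 + K₁ ^ 2 + K₂ ^ 2) * (γ * t)
        + (K₁ / 2) * (K₁ ^ 2 + K₂ ^ 2 - 1) * Real.log (P t)
        - 2 * K₁ * K₂ * Real.arctan (K₁ * Real.tan (γ * t) + K₂)) /
        (4 * K₁ ^ 2 * K₂ ^ 2 + (1 + K₂ ^ 2 - K₁ ^ 2) ^ 2))) :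
    ∀ t, Real.cos (γ * t) ≠ 0 → HasDerivAt θ (ω t) t := by
  intro t hc
  have hθf : θ = fun t => (2 / γ) * Real.sqrt (2 * h / J) *
      ((K₂ * (1 + K₁ ^ 2 + K₂ ^ 2) * (γ * t)
        + (K₁ / 2) * (K₁ ^ 2 + K₂ ^ 2 - 1) * Real.log (P t)
        - 2 * K₁ * K₂ * Real.arctan (K₁ * Real.tan (γ * t) + K₂)) /
        (4 * K₁ ^ 2 * K₂ ^ 2 + (1 + K₂ ^ 2 - K₁ ^ 2) ^ 2)) := funext hθ
  have hPf : P = fun t => (1 + K₂ ^ 2) * Real.cos (γ * t) ^ 2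
      + 2 * K₁ * K₂ * Real.sin (γ * t) * Real.cos (γ * t)
      + K₁ ^ 2 * Real.sin (γ * t) ^ 2 := funext hP
  have hid : HasDerivAt (fun t : ℝ => γ * t) γ t := by
    simpa using (hasDerivAt_id t).const_mul γ
  have hcos : HasDerivAt (fun t : ℝ => Real.cos (γ * t))
      (-Real.sin (γ * t) * γ) t := (Real.hasDerivAt_cos (γ * t)).comp t hid
  have hsin : HasDerivAt (fun t : ℝ => Real.sin (γ * t))
      (Real.cos (γ * t) * γ) t := (Real.hasDerivAt_sin (γ * t)).comp t hid
  have hPd : HasDerivAt P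
      ((1 + K₂ ^ 2) * (2 * Real.cos (γ * t) * (-Real.sin (γ * t) * γ))
        + 2 * K₁ * K₂ * ((Real.cos (γ * t) * γ) * Real.cos (γ * t)
            + Real.sin (γ * t) * (-Real.sin (γ * t) * γ))
        + K₁ ^ 2 * (2 * Real.sin (γ * t) * (Real.cos (γ * t) * γ))) t := by
    rw [hPf]
    have := ((((hcos.pow 2).const_mul (1 + K₂ ^ 2)).add
      (((hsin.mul hcos).const_mul (2 * K₁ * K₂)))).add
      ((hsin.pow 2).const_mul (K₁ ^ 2)))
    convert this using 1
    · rfl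
    · rfl
    · funext x; simp only [Pi.add_apply, Pi.mul_apply, Pi.pow_apply]; ring
    · norm_num
  have hPt : P t ≠ 0 := ne_of_gt (hPpos t)
  have hlog : HasDerivAt (fun t => Real.log (P t))
      (((1 + K₂ ^ 2) * (2 * Real.cos (γ * t) * (-Real.sin (γ * t) * γ))
        + 2 * K₁ * K₂ * ((Real.cos (γ * t) * γ) * Real.cos (γ * t)
            + Real.sin (γ * t) * (-Real.sin (γ * t) * γ))
        + K₁ ^ 2 * (2 * Real.sin (γ * t) * (Real.cos (γ * t) * γ))) / P t) t := by
    simpa [div_eq_mul_inv, mul_comm] using hPd.log hPt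
  have htan : HasDerivAt (fun t : ℝ => Real.tan (γ * t))
      (1 / Real.cos (γ * t) ^ 2 * γ) t := (Real.hasDerivAt_tan hc).comp t hid
  have hu : HasDerivAt (fun t : ℝ => K₁ * Real.tan (γ * t) + K₂)
      (K₁ * (1 / Real.cos (γ * t) ^ 2 * γ)) t := (htan.const_mul K₁).add_const K₂
  have harc : HasDerivAt (fun t => Real.arctan (K₁ * Real.tan (γ * t) + K₂))
      (1 / (1 + (K₁ * Real.tan (γ * t) + K₂) ^ 2)
        * (K₁ * (1 / Real.cos (γ * t) ^ 2 * γ))) t := hu.arctan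
  have hg1 : HasDerivAt (fun t : ℝ => K₂ * (1 + K₁ ^ 2 + K₂ ^ 2) * (γ * t))
      (K₂ * (1 + K₁ ^ 2 + K₂ ^ 2) * γ) t := hid.const_mul _
  have hmain := (((hg1.add (hlog.const_mul ((K₁ / 2) * (K₁ ^ 2 + K₂ ^ 2 - 1)))).sub
      (harc.const_mul (2 * K₁ * K₂))).div_const
      (4 * K₁ ^ 2 * K₂ ^ 2 + (1 + K₂ ^ 2 - K₁ ^ 2) ^ 2)).const_mul
      ((2 / γ) * Real.sqrt (2 * h / J))
  rw [hθf]
  convert hmain using 1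
  · rfl
  · rfl
  · rfl
  have hγ' : γ ≠ 0 := ne_of_gt hγ
  have hsc : Real.sin (γ * t) ^ 2 + Real.cos (γ * t) ^ 2 = 1 :=
    Real.sin_sq_add_cos_sq _
  have h1u : 1 + (K₁ * Real.tan (γ * t) + K₂) ^ 2 = P t / Real.cos (γ * t) ^ 2 := by
    rw [Real.tan_eq_sin_div_cos, hP]
    field_simp
    ring
  -- simplify the arctan derivative factor
  have harcsimp : 1 / (1 + (K₁ * Real.tan (γ * t) + K₂) ^ 2)
      * (K₁ * (1 / Real.cos (γ * t) ^ 2 * γ)) = K₁ * γ / P t := by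
    rw [h1u]
    field_simp
  rw [hω, harcsimp]
  have key : (K₂ * (1 + K₁ ^ 2 + K₂ ^ 2) * γ
      + (K₁ / 2) * (K₁ ^ 2 + K₂ ^ 2 - 1) *
        (((1 + K₂ ^ 2) * (2 * Real.cos (γ * t) * (-Real.sin (γ * t) * γ))
          + 2 * K₁ * K₂ * ((Real.cos (γ * t) * γ) * Real.cos (γ * t)
              + Real.sin (γ * t) * (-Real.sin (γ * t) * γ))
          + K₁ ^ 2 * (2 * Real.sin (γ * t) * (Real.cos (γ * t) * γ))) / P t)
      - 2 * K₁ * K₂ * (K₁ * γ / P t)) /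
      (4 * K₁ ^ 2 * K₂ ^ 2 + (1 + K₂ ^ 2 - K₁ ^ 2) ^ 2)
      = γ * ((K₂ * Real.cos (γ * t) ^ 2
          + K₁ * Real.sin (γ * t) * Real.cos (γ * t)) / P t) := by
    have hkeypoly : K₂ * (1 + K₁ ^ 2 + K₂ ^ 2) * γ * P t
        + (K₁ / 2) * (K₁ ^ 2 + K₂ ^ 2 - 1) *
          ((1 + K₂ ^ 2) * (2 * Real.cos (γ * t) * (-Real.sin (γ * t) * γ))
            + 2 * K₁ * K₂ * ((Real.cos (γ * t) * γ) * Real.cos (γ * t)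
                + Real.sin (γ * t) * (-Real.sin (γ * t) * γ))
            + K₁ ^ 2 * (2 * Real.sin (γ * t) * (Real.cos (γ * t) * γ)))
        - 2 * K₁ * K₂ * (K₁ * γ)
        = (4 * K₁ ^ 2 * K₂ ^ 2 + (1 + K₂ ^ 2 - K₁ ^ 2) ^ 2) *
          (γ * (K₂ * Real.cos (γ * t) ^ 2
            + K₁ * Real.sin (γ * t) * Real.cos (γ * t))) := by
      rw [hP]
      linear_combination (2 * K₁ ^ 2 * K₂ * γ) * hsc
    have step1 : K₂ * (1 + K₁ ^ 2 + K₂ ^ 2) * γ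
        + (K₁ / 2) * (K₁ ^ 2 + K₂ ^ 2 - 1) *
          (((1 + K₂ ^ 2) * (2 * Real.cos (γ * t) * (-Real.sin (γ * t) * γ))
            + 2 * K₁ * K₂ * ((Real.cos (γ * t) * γ) * Real.cos (γ * t)
                + Real.sin (γ * t) * (-Real.sin (γ * t) * γ))
            + K₁ ^ 2 * (2 * Real.sin (γ * t) * (Real.cos (γ * t) * γ))) / P t)
        - 2 * K₁ * K₂ * (K₁ * γ / P t)
        = (K₂ * (1 + K₁ ^ 2 + K₂ ^ 2) * γ * P t
          + (K₁ / 2) * (K₁ ^ 2 + K₂ ^ 2 - 1) *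
            ((1 + K₂ ^ 2) * (2 * Real.cos (γ * t) * (-Real.sin (γ * t) * γ))
              + 2 * K₁ * K₂ * ((Real.cos (γ * t) * γ) * Real.cos (γ * t)
                  + Real.sin (γ * t) * (-Real.sin (γ * t) * γ))
              + K₁ ^ 2 * (2 * Real.sin (γ * t) * (Real.cos (γ * t) * γ)))
          - 2 * K₁ * K₂ * (K₁ * γ)) / P t := by
      field_simp
    rw [step1, hkeypoly, mul_comm (4 * K₁ ^ 2 * K₂ ^ 2 + (1 + K₂ ^ 2 - K₁ ^ 2) ^ 2),
      mul_div_assoc, mul_div_assoc, div_div, mul_comm (P t), ← div_div,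
      div_self hden]
    ring
  rw [key]
  field_simp
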